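/- In the subsonic region, the Bernoulli equation (γA(S̃₀^e)/(γ−1))(ρ̃^e)^{γ+1} − B̃₀^e(ρ̃^e)² + ((∂ξφ)²+1)/(2(∂ηφ)²) = 0 admits a unique solution ρ̃^e = ρ̃^e(Dφ; B̃₀^e, S̃₀^e), continuously differentiable in Dφ=(∂ξφ,∂ηφ). Moreover its partial derivatives are ∂ρ̃^e/∂(∂ξφ) = −∂ξφ / [ρ̃^e (∂ηφ)² ((c̃^e)² − (1+(∂ξφ)²)/((ρ̃^e)²(∂ηφ)²))] and ∂ρ̃^e/∂(∂ηφ) = ((∂ξφ)²+1) / [ρ̃^e (∂ηφ)³ ((c̃^e)² − (1+(∂ξφ)²)/((ρ̃^e)²(∂ηφ)²))], where c̃^e = √(γA(S̃₀^e)(ρ̃^e)^{γ−1}). -/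

import Mathlib

noncomputable section

open Real Set Metric MeasureTheory Filter

abbrev Pt := ℝ × ℝ

def hNorm {E : Type*} [NormedAddCommGroup E] [NormedSpace ℝ E]
    (m : ℕ) (α : ℝ) (Ω : Set Pt) (f : Pt → E) : ℝ :=
  (∑ j ∈ Finset.range (m + 1),
    sSup ((fun x => ‖iteratedFDeriv ℝ j f x‖) '' Ω)) +
  sSup ((fun q : Pt × Pt =>
    ‖iteratedFDeriv ℝ m f q.1 - iteratedFDeriv ℝ m f q.2‖ / dist q.1 q.2 ^ α) '' (Ω ×ˢ Ω))

def whNorm {E : Type*} [NormedAddCommGroup E] [NormedSpace ℝ E]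
    (m : ℕ) (α k : ℝ) (Sg Ω : Set Pt) (f : Pt → E) : ℝ :=
  (∑ j ∈ Finset.range (m + 1),
    sSup ((fun x => infDist x Sg ^ max ((j : ℝ) + k) 0 * ‖iteratedFDeriv ℝ j f x‖) '' Ω)) +
  sSup ((fun q : Pt × Pt =>
    min (infDist q.1 Sg) (infDist q.2 Sg) ^ max ((m : ℝ) + α + k) 0 *
      ‖iteratedFDeriv ℝ m f q.1 - iteratedFDeriv ℝ m f q.2‖ / dist q.1 q.2 ^ α) '' (Ω ×ˢ Ω))

def hNorm1 {E : Type*} [NormedAddCommGroup E] [NormedSpace ℝ E]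
    (m : ℕ) (α : ℝ) (s : Set ℝ) (f : ℝ → E) : ℝ :=
  (∑ j ∈ Finset.range (m + 1),
    sSup ((fun x => ‖iteratedDeriv j f x‖) '' s)) +
  sSup ((fun q : ℝ × ℝ =>
    ‖iteratedDeriv m f q.1 - iteratedDeriv m f q.2‖ / |q.1 - q.2| ^ α) '' (s ×ˢ s))

def whNorm1 {E : Type*} [NormedAddCommGroup E] [NormedSpace ℝ E]
    (m : ℕ) (α k : ℝ) (Sg s : Set ℝ) (f : ℝ → E) : ℝ :=
  (∑ j ∈ Finset.range (m + 1),
    sSup ((fun x => infDist x Sg ^ max ((j : ℝ) + k) 0 * ‖iteratedDeriv j f x‖) '' s)) +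
  sSup ((fun q : ℝ × ℝ =>
    min (infDist q.1 Sg) (infDist q.2 Sg) ^ max ((m : ℝ) + α + k) 0 *
      ‖iteratedDeriv m f q.1 - iteratedDeriv m f q.2‖ / |q.1 - q.2| ^ α) '' (s ×ˢ s))

def pd1 (f : Pt → ℝ) (x : Pt) : ℝ := fderiv ℝ f x (1, 0)
def pd2 (f : Pt → ℝ) (x : Pt) : ℝ := fderiv ℝ f x (0, 1)

def Afun (κ cν S : ℝ) : ℝ := κ * Real.exp (S / cν)

def Theta (γ κ cν pb B S p : ℝ) : ℝ :=
  ∫ τ in pb..p,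
    Real.sqrt ((γ - 1) * Afun κ cν S ^ (1 / γ) *
        (2 * (γ - 1) * B - γ * (γ + 1) * Afun κ cν S ^ (1 / γ) * τ ^ ((γ - 1) / γ))) /
      (2 * Real.sqrt γ * ((γ - 1) * B - γ * Afun κ cν S ^ (1 / γ) * τ ^ (1 - 1 / γ)) *
        τ ^ ((γ + 1) / (2 * γ)))


/-- (3.29): the Bernoulli relation determining the subsonic density;
`a = A(S̃₀^e)`, `B = B̃₀^e`, `q = Dφ = (∂_ξφ, ∂_ηφ)`. -/
def bern (γ a B : ℝ) (q : Pt) (ρ : ℝ) : ℝ :=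
  γ * a / (γ - 1) * ρ ^ (γ + 1) - B * ρ ^ 2 + (q.1 ^ 2 + 1) / (2 * q.2 ^ 2)

/-- square of the sonic speed, `c² = γ A(S) ρ^{γ−1}`. -/
def sonic2 (γ a ρ : ℝ) : ℝ := γ * a * ρ ^ (γ - 1)

/-- the subsonic margin `c² − (1+(∂_ξφ)²)/(ρ²(∂_ηφ)²) = c² − (ũ² + ṽ²)`. -/
def subMargin (γ a : ℝ) (q : Pt) (ρ : ℝ) : ℝ :=
  sonic2 γ a ρ - (1 + q.1 ^ 2) / (ρ ^ 2 * q.2 ^ 2)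

lemma aux_h_eq (γ a B : ℝ) (hγ : 1 < γ) (q : Pt) (hq2 : q.2 ≠ 0) (x : ℝ) (hx : 0 < x)
    (h0 : bern γ a B q x = 0) :
    γ * a * (γ + 1) / (γ - 1) * x ^ (γ - 1) - 2 * B = subMargin γ a q x := by
  have hx1 : x ^ (γ + 1) = x ^ (γ - 1) * x ^ 2 := by
    rw [← Real.rpow_natCast x 2, ← Real.rpow_add hx]
    congr 1; push_cast; ring
  unfold bern at h0
  unfold subMargin sonic2
  rw [hx1] at h0
  have hγ1 : γ - 1 ≠ 0 := by linarith
  field_simp at h0 ⊢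
  nlinarith [h0, sq_nonneg x, sq_nonneg q.2]

lemma aux_deriv (γ a B : ℝ) (q : Pt) (x : ℝ) (hx : 0 < x) :
    HasDerivAt (fun t => bern γ a B q t)
      (γ * a / (γ - 1) * ((γ + 1) * x ^ γ) - 2 * B * x) x := by
  unfold bern
  have h1 := (Real.hasDerivAt_rpow_const (x := x) (p := γ + 1) (Or.inl hx.ne')).const_mul
      (γ * a / (γ - 1))
  have h2 := (hasDerivAt_pow 2 x).const_mul B
  have h3 := (h1.sub h2).add_const ((q.1 ^ 2 + 1) / (2 * q.2 ^ 2))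
  refine h3.congr_deriv ?_
  rw [show γ + 1 - 1 = γ by ring]
  ring

lemma aux_factor (γ a B : ℝ) (x : ℝ) (hx : x ≠ 0) :
    γ * a / (γ - 1) * ((γ + 1) * x ^ γ) - 2 * B * x
      = x * (γ * a * (γ + 1) / (γ - 1) * x ^ (γ - 1) - 2 * B) := by
  have h : x ^ (γ - 1) * x = x ^ γ := by
    rw [← Real.rpow_add_one hx]; norm_num
  rw [← h]; ring

theorem statement_5 (γ a B : ℝ) (hγ : 1 < γ) (ha : 0 < a) (hB : 0 < B)
    (q0 : Pt) (hq2 : 0 < q0.2) (ρ0 : ℝ) (hρ0 : 0 < ρ0)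
    (heq : bern γ a B q0 ρ0 = 0) (hsub : 0 < subMargin γ a q0 ρ0) :
    -- uniqueness of the density within the subsonic branch
    (∀ r : ℝ, 0 < r → bern γ a B q0 r = 0 → 0 < subMargin γ a q0 r → r = ρ0) ∧
    -- a continuously differentiable solution map `Dφ ↦ ρ̃^e(Dφ; B̃₀^e, S̃₀^e)`
    -- with the partial derivatives (3.30)
    ∃ ρe : Pt → ℝ, ρe q0 = ρ0 ∧
      (∀ᶠ q in nhds q0, 0 < ρe q ∧ bern γ a B q (ρe q) = 0 ∧ 0 < subMargin γ a q (ρe q)) ∧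
      ContDiffAt ℝ 1 ρe q0 ∧
      fderiv ℝ ρe q0 (1, 0) = -(q0.1 / (ρ0 * q0.2 ^ 2 * subMargin γ a q0 ρ0)) ∧
      fderiv ℝ ρe q0 (0, 1) = (q0.1 ^ 2 + 1) / (ρ0 * q0.2 ^ 3 * subMargin γ a q0 ρ0) := by
  have hγ1 : (0:ℝ) < γ - 1 := by linarith
  set h : ℝ → ℝ := fun x => γ * a * (γ + 1) / (γ - 1) * x ^ (γ - 1) - 2 * B with hh
  have hcoef : 0 < γ * a * (γ + 1) / (γ - 1) := by positivity
  have hmonoh : ∀ x y : ℝ, 0 < x → x < y → h x < h y := by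
    intro x y hx hxy
    have : x ^ (γ - 1) < y ^ (γ - 1) :=
      Real.rpow_lt_rpow hx.le hxy hγ1
    simp only [hh]
    nlinarith
  -- uniqueness
  have uniq : ∀ r : ℝ, 0 < r → bern γ a B q0 r = 0 → 0 < subMargin γ a q0 r → r = ρ0 := by
    intro r hr hber hsm
    have hhr : 0 < h r := by
      simp only [hh]; rw [aux_h_eq γ a B hγ q0 hq2.ne' r hr hber]; exact hsm
    have hhρ0 : 0 < h ρ0 := by
      simp only [hh]; rw [aux_h_eq γ a B hγ q0 hq2.ne' ρ0 hρ0 heq]; exact hsub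
    set m := min r ρ0 with hm
    have hm0 : 0 < m := lt_min hr hρ0
    have hhm : 0 < h m := by
      rcases min_cases r ρ0 with ⟨e, _⟩ | ⟨e, _⟩ <;> rw [hm, e] <;> assumption
    have hmono : StrictMonoOn (fun x => bern γ a B q0 x) (Ici m) := by
      apply strictMonoOn_of_deriv_pos (convex_Ici m)
      · intro x hx
        exact (aux_deriv γ a B q0 x (hm0.trans_le hx)).continuousAt.continuousWithinAt
      · intro x hx
        rw [interior_Ici] at hx
        have hx0 : 0 < x := hm0.trans hx
        rw [(aux_deriv γ a B q0 x hx0).deriv, aux_factor γ a B x hx0.ne']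
        have : 0 < h x := lt_trans hhm (hmonoh m x hm0 hx)
        exact mul_pos hx0 this
    exact hmono.injOn (mem_Ici.mpr (min_le_left r ρ0))
      (mem_Ici.mpr (min_le_right r ρ0)) (by show bern γ a B q0 r = bern γ a B q0 ρ0; rw [hber, heq])
  refine ⟨uniq, ?_⟩
  -- setup
  set z0 : Pt × ℝ := (q0, ρ0) with hz0
  set c1 : ℝ := q0.1 with hc1
  set c2 : ℝ := q0.2 with hc2
  have hc2ne : c2 ≠ 0 := hq2.ne'
  set sub0 : ℝ := subMargin γ a q0 ρ0 with hsub0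
  set A1 : ℝ := c1 / c2 ^ 2 with hA1
  set A2 : ℝ := -((c1 ^ 2 + 1) / c2 ^ 3) with hA2
  set D : ℝ := γ * a / (γ - 1) * ((γ + 1) * ρ0 ^ γ) - 2 * B * ρ0 with hD
  have hDval : D = ρ0 * sub0 := by
    rw [hD, aux_factor γ a B ρ0 hρ0.ne', aux_h_eq γ a B hγ q0 hq2.ne' ρ0 hρ0 heq]
  have hDpos : 0 < D := by rw [hDval]; exact mul_pos hρ0 hsub
  have hDne : D ≠ 0 := hDpos.ne'
  -- coordinate CLMs
  set e1 : (Pt × ℝ) →L[ℝ] ℝ :=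
    (ContinuousLinearMap.fst ℝ ℝ ℝ).comp (ContinuousLinearMap.fst ℝ Pt ℝ) with he1
  set e2 : (Pt × ℝ) →L[ℝ] ℝ :=
    (ContinuousLinearMap.snd ℝ ℝ ℝ).comp (ContinuousLinearMap.fst ℝ Pt ℝ) with he2
  set e3 : (Pt × ℝ) →L[ℝ] ℝ := ContinuousLinearMap.snd ℝ Pt ℝ with he3
  set L0 : (Pt × ℝ) →L[ℝ] ℝ := A1 • e1 + A2 • e2 + D • e3 with hL0
  set M : (Pt × ℝ) →L[ℝ] (Pt × ℝ) := (ContinuousLinearMap.fst ℝ Pt ℝ).prod L0 with hM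
  set N : (Pt × ℝ) →L[ℝ] (Pt × ℝ) :=
    (ContinuousLinearMap.fst ℝ Pt ℝ).prod (D⁻¹ • (e3 - A1 • e1 - A2 • e2)) with hN
  have happM : ∀ v : Pt × ℝ, M v = (v.1, A1 * v.1.1 + A2 * v.1.2 + D * v.2) := by
    intro v
    simp [hM, hL0, he1, he2, he3]
  have happN : ∀ v : Pt × ℝ, N v = (v.1, D⁻¹ * (v.2 - A1 * v.1.1 - A2 * v.1.2)) := by
    intro v
    simp [hN, he1, he2, he3]
    try ring
  have hMN : Function.LeftInverse N M := by
    intro v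
    rw [happM, happN]
    refine Prod.ext rfl ?_
    show D⁻¹ * (A1 * v.1.1 + A2 * v.1.2 + D * v.2 - A1 * v.1.1 - A2 * v.1.2) = v.2
    field_simp
    try ring
  have hNM : Function.RightInverse N M := by
    intro v
    rw [happN, happM]
    refine Prod.ext rfl ?_
    show A1 * v.1.1 + A2 * v.1.2 + D * (D⁻¹ * (v.2 - A1 * v.1.1 - A2 * v.1.2)) = v.2
    field_simp
    try ring
  set E : (Pt × ℝ) ≃L[ℝ] (Pt × ℝ) := ContinuousLinearEquiv.equivOfInverse M N hMN hNM with hE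
  set F : Pt × ℝ → Pt × ℝ := fun z => (z.1, bern γ a B z.1 z.2) with hF
  -- derivative of the bern part
  have hx1 : HasFDerivAt (fun z : Pt × ℝ => z.1.1) e1 z0 :=
    (hasFDerivAt_fst (𝕜 := ℝ)).comp z0 (hasFDerivAt_fst (𝕜 := ℝ))
  have hx2 : HasFDerivAt (fun z : Pt × ℝ => z.1.2) e2 z0 :=
    (hasFDerivAt_snd (𝕜 := ℝ)).comp z0 (hasFDerivAt_fst (𝕜 := ℝ))
  have hT1 : HasFDerivAt (fun z : Pt × ℝ => γ * a / (γ - 1) * z.2 ^ (γ + 1))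
      ((γ * a / (γ - 1) * ((γ + 1) * ρ0 ^ (γ + 1 - 1))) • e3) z0 := by
    have := (((Real.hasDerivAt_rpow_const (x := ρ0) (p := γ + 1)
      (Or.inl hρ0.ne')).const_mul (γ * a / (γ - 1))).comp_hasFDerivAt z0
        (hasFDerivAt_snd (𝕜 := ℝ)))
    exact this
  have hT2 : HasFDerivAt (fun z : Pt × ℝ => B * z.2 ^ 2)
      ((B * (2 * ρ0 ^ 1)) • e3) z0 := by
    have := ((hasDerivAt_pow 2 ρ0).const_mul B).comp_hasFDerivAt z0 (hasFDerivAt_snd (𝕜 := ℝ))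
    convert this using 2
    all_goals try rfl
    all_goals push_cast; ring
  have hu : HasFDerivAt (fun z : Pt × ℝ => z.1.1 ^ 2 + 1) ((2 * c1 ^ 1 : ℝ) • e1) z0 := by
    have := ((hasDerivAt_pow 2 q0.1).comp_hasFDerivAt z0 hx1).add_const (1 : ℝ)
    convert this using 2
    all_goals try rfl
    all_goals push_cast; ring
  have hw : HasFDerivAt (fun z : Pt × ℝ => (2 * z.1.2 ^ 2)⁻¹)
      ((-(2 * (2 * c2 ^ 1)) / (2 * c2 ^ 2) ^ 2) • e2) z0 := by
    have hin : HasDerivAt (fun t : ℝ => (2 * t ^ 2)⁻¹)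
        (-(2 * (2 * c2 ^ 1)) / (2 * c2 ^ 2) ^ 2) c2 := by
      have h2 : HasDerivAt (fun t : ℝ => 2 * t ^ 2) (2 * (2 * c2 ^ 1)) c2 := by
        have := (hasDerivAt_pow 2 c2).const_mul (2 : ℝ)
        convert this using 1
        all_goals try rfl
        all_goals push_cast; ring
      exact h2.inv (by positivity)
    have := hin.comp_hasFDerivAt z0 hx2
    exact this
  have hT3 : HasFDerivAt (fun z : Pt × ℝ => (z.1.1 ^ 2 + 1) / (2 * z.1.2 ^ 2))
      (((c1 ^ 2 + 1 : ℝ)) • ((-(2 * (2 * c2 ^ 1)) / (2 * c2 ^ 2) ^ 2) • e2)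
        + ((2 * c2 ^ 2 : ℝ)⁻¹) • ((2 * c1 ^ 1 : ℝ) • e1)) z0 := by
    exact hu.mul hw
  have hgL0 : HasFDerivAt (fun z : Pt × ℝ => bern γ a B z.1 z.2) L0 z0 := by
    refine HasFDerivAt.congr_fderiv (((hT1.sub hT2).add hT3) :) ?_
    refine ContinuousLinearMap.ext fun v => ?_
    simp only [hL0, he1, he2, he3, ContinuousLinearMap.add_apply,
      ContinuousLinearMap.sub_apply, ContinuousLinearMap.smul_apply,
      ContinuousLinearMap.coe_comp', Function.comp_apply,
      ContinuousLinearMap.coe_fst', ContinuousLinearMap.coe_snd', smul_eq_mul]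
    rw [hA1, hA2, hD, show γ + 1 - 1 = γ by ring]
    field_simp
    ring
  have hFM : HasFDerivAt F M z0 := (hasFDerivAt_fst (𝕜 := ℝ)).prodMk hgL0
  -- smoothness of F
  have hFc : ContDiffAt ℝ 1 F z0 := by
    refine (contDiffAt_fst).prodMk ?_
    have hq : ContDiffAt ℝ 1 (fun z : Pt × ℝ => γ * a / (γ - 1) * z.2 ^ (γ + 1)) z0 :=
      (contDiffAt_const (c := γ * a / (γ - 1))).mul
        ((Real.contDiffAt_rpow_const_of_ne (x := ρ0) (p := γ + 1) hρ0.ne').comp z0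
          contDiffAt_snd)
    have hq2' : ContDiffAt ℝ 1 (fun z : Pt × ℝ => B * z.2 ^ 2) z0 :=
      (contDiffAt_const (c := B)).mul (contDiffAt_snd.pow 2)
    have hq3 : ContDiffAt ℝ 1 (fun z : Pt × ℝ => (z.1.1 ^ 2 + 1) / (2 * z.1.2 ^ 2)) z0 := by
      refine ContDiffAt.div ?_ ?_ (by positivity)
      · exact ((contDiffAt_fst.comp z0 contDiffAt_fst).pow 2).add contDiffAt_const
      · exact (contDiffAt_const (c := (2:ℝ))).mul ((contDiffAt_snd.comp z0 contDiffAt_fst).pow 2)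
    exact ((hq.sub hq2').add hq3 : ContDiffAt ℝ 1 _ z0)
  have hFE : HasFDerivAt F (E : (Pt × ℝ) →L[ℝ] (Pt × ℝ)) z0 := hFM
  have hS : HasStrictFDerivAt F (E : (Pt × ℝ) →L[ℝ] (Pt × ℝ)) z0 :=
    hFc.hasStrictFDerivAt' hFE one_ne_zero
  set n : Pt × ℝ → Pt × ℝ := hS.localInverse F E z0 with hn
  have hFz0 : F z0 = (q0, 0) := by
    simp only [hF, hz0]
    exact Prod.ext rfl heq
  set ρe : Pt → ℝ := fun q => (n (q, 0)).2 with hρe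
  have hnq0 : n (q0, 0) = z0 := by
    rw [← hFz0]
    exact hS.localInverse_apply_image
  have hρeq0 : ρe q0 = ρ0 := by rw [hρe]; simp only; rw [hnq0]
  -- the eventual properties
  have hk : ContinuousAt (fun q : Pt => ((q, (0:ℝ)) : Pt × ℝ)) q0 :=
    (continuous_id.prodMk continuous_const).continuousAt
  have hknhds : Filter.Tendsto (fun q : Pt => ((q, (0:ℝ)) : Pt × ℝ)) (nhds q0) (nhds (F z0)) := by
    rw [hFz0]; exact hk
  have hev0 : ∀ᶠ q in nhds q0, F (n (q, 0)) = (q, 0) :=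
    hknhds.eventually hS.eventually_right_inverse
  have hbern_ev : ∀ᶠ q in nhds q0, (n (q, 0)).1 = q ∧ bern γ a B q (ρe q) = 0 := by
    filter_upwards [hev0] with q hq
    have h1 : (n (q, 0)).1 = q := congrArg Prod.fst hq
    have h2 : bern γ a B (n (q, 0)).1 (n (q, 0)).2 = 0 := congrArg Prod.snd hq
    rw [h1] at h2
    exact ⟨h1, h2⟩
  have hncont : ContinuousAt n (q0, 0) := by
    have := hS.localInverse_continuousAt
    rwa [hFz0] at this
  have hρecont : ContinuousAt ρe q0 := by
    have h1 : ContinuousAt (fun q : Pt => n (q, 0)) q0 :=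
      ContinuousAt.comp (x := q0) hncont hk
    exact ContinuousAt.comp (x := q0) continuous_snd.continuousAt h1
  have hρetend : Filter.Tendsto ρe (nhds q0) (nhds ρ0) := by
    rw [show (ρ0 : ℝ) = ρe q0 from hρeq0.symm]
    exact hρecont
  have hρepos : ∀ᶠ q in nhds q0, 0 < ρe q := hρetend (Ioi_mem_nhds hρ0)
  have hsmcont : ContinuousAt (fun q : Pt => subMargin γ a q (ρe q)) q0 := by
    unfold subMargin sonic2
    have hg : ContinuousAt (fun x : ℝ => x ^ (γ - 1)) (ρe q0) := by
      rw [hρeq0]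
      exact Real.continuousAt_rpow_const ρ0 (γ - 1) (Or.inl hρ0.ne')
    refine ContinuousAt.sub ?_ ?_
    · exact continuousAt_const.mul (ContinuousAt.comp (x := q0) hg hρecont)
    · refine ContinuousAt.div ?_ ?_ ?_
      · exact continuousAt_const.add ((continuous_fst.continuousAt).pow 2)
      · exact (hρecont.pow 2).mul ((continuous_snd.continuousAt).pow 2)
      · rw [hρeq0]
        positivity
  have hsubpos : ∀ᶠ q in nhds q0, 0 < subMargin γ a q (ρe q) := by
    have hvalpos : 0 < subMargin γ a q0 (ρe q0) := by rw [hρeq0]; exact hsub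
    exact hsmcont (Ioi_mem_nhds hvalpos)
  -- smoothness of ρe
  have hncd : ContDiffAt ℝ 1 n (q0, 0) := by
    have := hFc.to_localInverse (f' := E) hFE one_ne_zero
    rwa [hFz0] at this
  have hρecd : ContDiffAt ℝ 1 ρe q0 := by
    have hkcd : ContDiffAt ℝ 1 (fun q : Pt => ((q, (0:ℝ)) : Pt × ℝ)) q0 :=
      contDiffAt_id.prodMk contDiffAt_const
    have h1 : ContDiffAt ℝ 1 (fun q : Pt => n (q, 0)) q0 := hncd.comp q0 hkcd
    exact contDiffAt_snd.comp q0 h1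
  -- derivative of ρe
  have hSymm : HasStrictFDerivAt n ((E.symm : (Pt × ℝ) →L[ℝ] (Pt × ℝ))) (q0, 0) := by
    have := hS.to_localInverse
    rwa [hFz0] at this
  have hEsymmN : ∀ v : Pt × ℝ, E.symm v = N v := by
    intro v
    rw [hE, ContinuousLinearEquiv.symm_equivOfInverse]
    rfl
  have hkfd : HasFDerivAt (fun q : Pt => ((q, (0:ℝ)) : Pt × ℝ))
      ((ContinuousLinearMap.id ℝ Pt).prod 0) q0 :=
    (hasFDerivAt_id q0).prodMk (hasFDerivAt_const 0 q0)
  have hρefd : HasFDerivAt ρe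
      ((ContinuousLinearMap.snd ℝ Pt ℝ).comp
        (((E.symm : (Pt × ℝ) →L[ℝ] (Pt × ℝ))).comp
          ((ContinuousLinearMap.id ℝ Pt).prod 0))) q0 := by
    have h1 : HasFDerivAt (fun q : Pt => n (q, 0))
        (((E.symm : (Pt × ℝ) →L[ℝ] (Pt × ℝ))).comp
          ((ContinuousLinearMap.id ℝ Pt).prod 0)) q0 :=
      (hSymm.hasFDerivAt).comp q0 hkfd
    exact (hasFDerivAt_snd (𝕜 := ℝ)).comp q0 h1
  have hfder := hρefd.fderiv
  have hsub0ne : sub0 ≠ 0 := hsub.ne'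
  refine ⟨ρe, hρeq0, ?_, hρecd, ?_, ?_⟩
  · filter_upwards [hρepos, hbern_ev, hsubpos] with q h1 h2 h3
    exact ⟨h1, h2.2, h3⟩
  · rw [hfder]
    simp only [ContinuousLinearMap.coe_comp', Function.comp_apply,
      ContinuousLinearMap.prod_apply, ContinuousLinearMap.coe_id', id_eq,
      ContinuousLinearMap.zero_apply, ContinuousLinearMap.coe_snd',
      ContinuousLinearEquiv.coe_coe]
    rw [hEsymmN]
    rw [happN]
    simp only
    rw [hA1, hA2, hDval, hsub0]
    field_simp
    try ring
    all_goals tauto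
  · rw [hfder]
    simp only [ContinuousLinearMap.coe_comp', Function.comp_apply,
      ContinuousLinearMap.prod_apply, ContinuousLinearMap.coe_id', id_eq,
      ContinuousLinearMap.zero_apply, ContinuousLinearMap.coe_snd',
      ContinuousLinearEquiv.coe_coe]
    rw [hEsymmN]
    rw [happN]
    simp only
    rw [hA1, hA2, hDval, hsub0]
    field_simp
    try ring
    all_goals tauto
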